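/- Let n be a positive integer and ν an integer with n < 2^{ν-1}. Then B(2^ν·n + 1) = B(n) + 1 and B((2^ν·n + 1)^2) = B(n^2) + B(n) + 1. -/

import Mathlib

def B (n : ℕ) : ℕ := (Nat.digits 2 n).sum

lemma B_split (k a m : ℕ) (ha : a < 2 ^ k) (hm : 0 < m) :
    B (2 ^ k * m + a) = B m + B a := by
  have hlen : (Nat.digits 2 a).length ≤ k := by
    rcases Nat.eq_zero_or_pos a with rfl | hapos
    · simp
    · rw [Nat.digits_len 2 a (by norm_num) hapos.ne']
      have := (Nat.log_lt_iff_lt_pow (by norm_num) hapos.ne').mpr ha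
      omega
  obtain ⟨j, rfl⟩ := Nat.exists_eq_add_of_le hlen
  rw [B, add_comm (2 ^ _ * m) a,
    ← Nat.digits_append_zeroes_append_digits (by norm_num) hm]
  simp [B, Nat.add_comm]

theorem stmt_7 (n ν : ℕ) (hn : 0 < n) (h : n < 2 ^ (ν - 1)) :
    B (2 ^ ν * n + 1) = B n + 1 ∧
    B ((2 ^ ν * n + 1) ^ 2) = B (n ^ 2) + B n + 1 := by
  have hν : 2 ≤ ν := by
    by_contra hc
    interval_cases ν <;> simp_all
  have h1 : (1 : ℕ) < 2 ^ ν := Nat.one_lt_two_pow (by omega)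
  have B1 : B 1 = 1 := by simp [B]
  constructor
  · rw [B_split ν 1 n h1 hn, B1]
  · have key : (2 ^ ν * n + 1) ^ 2 = 2 ^ (ν + 1) * (2 ^ (ν - 1) * n ^ 2 + n) + 1 := by
      have : 2 * ν = (ν + 1) + (ν - 1) := by omega
      ring_nf
      rw [show ν * 2 = (ν + 1) + (ν - 1) by omega, pow_add]
      ring
    rw [key, B_split (ν + 1) 1 _ (by have : (1:ℕ) < 2 ^ (ν+1) := Nat.one_lt_two_pow (by omega); exact this) (by positivity), B1,
      B_split (ν - 1) n (n ^ 2) h (by positivity)]
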